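/- Let E be a topological space, let n_c ≥ 2, let x₀ ∈ E, and let f_1, …, f_{n_c} : E → ℝ be functions that are strictly positive on E ∖ {x₀} and continuous at x₀. Fix an index i* with f_{i*}(x₀) = 0, and suppose f_j(x₀) > 0 for every j ≠ i*. Define on E ∖ {x₀} the softmax-of-reciprocal Moment-Aggregation loss L_MA(x) = Σ_{i=1}^{n_c} ω_i(x)·f_i(x), where ω_i(x) = exp(1/f_i(x)) / Σ_{j=1}^{n_c} exp(1/f_j(x)). Then L_MA(x) → 0 as x → x₀ within E ∖ {x₀}. -/

import Mathlib

open Topology Filter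

/-- If the candidate losses are strictly positive away from `x₀`, continuous at
`x₀`, the loss of candidate `i*` vanishes at `x₀` while the other losses are
positive at `x₀`, then the softmax-of-reciprocal Moment-Aggregation loss
tends to `0` as `x → x₀` within `E \ {x₀}`. -/
theorem softmax_ma_loss_tendsto_zero
    {E : Type*} [TopologicalSpace E] (n_c : ℕ) (hn : 2 ≤ n_c)
    (x₀ : E) (f : Fin n_c → E → ℝ)
    (hpos : ∀ i : Fin n_c, ∀ x : E, x ≠ x₀ → 0 < f i x)
    (hcont : ∀ i : Fin n_c, ContinuousAt (f i) x₀)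
    (istar : Fin n_c) (h0 : f istar x₀ = 0)
    (hothers : ∀ j : Fin n_c, j ≠ istar → 0 < f j x₀) :
    Tendsto
      (fun x => ∑ i, (Real.exp (1 / f i x) / ∑ j, Real.exp (1 / f j x)) * f i x)
      (𝓝[≠] x₀) (𝓝 0) := by
  have hne : ∀ᶠ x in 𝓝[≠] x₀, x ≠ x₀ := eventually_mem_nhdsWithin
  have hsumpos : ∀ x : E, 0 < ∑ j, Real.exp (1 / f j x) := fun x =>
    Finset.sum_pos (fun j _ => Real.exp_pos _) ⟨istar, Finset.mem_univ _⟩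
  have hfstar : Tendsto (f istar) (𝓝[≠] x₀) (𝓝 0) := by
    have := (hcont istar).tendsto
    rw [h0] at this
    exact this.mono_left nhdsWithin_le_nhds
  have hinv : Tendsto (fun x => 1 / f istar x) (𝓝[≠] x₀) atTop := by
    have h1 : Tendsto (f istar) (𝓝[≠] x₀) (𝓝[>] (0:ℝ)) := by
      rw [tendsto_nhdsWithin_iff]
      exact ⟨hfstar, hne.mono fun x hx => hpos istar x hx⟩
    simpa [one_div, Function.comp_def] using tendsto_inv_nhdsGT_zero.comp h1
  have key : ∀ i : Fin n_c,
      Tendsto (fun x => (Real.exp (1 / f i x) / ∑ j, Real.exp (1 / f j x)) * f i x)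
        (𝓝[≠] x₀) (𝓝 0) := by
    intro i
    by_cases hi : i = istar
    · subst hi
      apply squeeze_zero' (hne.mono fun x hx => ?_) (hne.mono fun x hx => ?_) hfstar
      · exact mul_nonneg (div_nonneg (Real.exp_pos _).le (hsumpos x).le)
          (hpos i x hx).le
      · have h1 : Real.exp (1 / f i x) / ∑ j, Real.exp (1 / f j x) ≤ 1 := by
          rw [div_le_one (hsumpos x)]
          exact Finset.single_le_sum (f := fun j => Real.exp (1 / f j x))
            (fun j _ => (Real.exp_pos _).le) (Finset.mem_univ _)
        calc (Real.exp (1 / f i x) / ∑ j, Real.exp (1 / f j x)) * f i x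
            ≤ 1 * f i x := mul_le_mul_of_nonneg_right h1 (hpos i x hx).le
          _ = f i x := one_mul _
    · have hbound : Tendsto (fun x => Real.exp (1 / f i x - 1 / f istar x) * f i x)
          (𝓝[≠] x₀) (𝓝 0) := by
      -- exponent → atBot
        have hconst : Tendsto (fun x => 1 / f i x) (𝓝[≠] x₀) (𝓝 (1 / f i x₀)) := by
          exact ((continuousAt_const.div (hcont i) (hothers i hi).ne').tendsto).mono_left
            nhdsWithin_le_nhds
        have hbot : Tendsto (fun x => 1 / f i x - 1 / f istar x) (𝓝[≠] x₀) atBot := by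
          have := tendsto_neg_atTop_atBot.comp hinv
          simpa [sub_eq_add_neg] using hconst.add_atBot this
        have hexp : Tendsto (fun x => Real.exp (1 / f i x - 1 / f istar x))
            (𝓝[≠] x₀) (𝓝 0) := Real.tendsto_exp_atBot.comp hbot
        have := hexp.mul (((hcont i).tendsto).mono_left nhdsWithin_le_nhds)
        simpa using this
      apply squeeze_zero' (hne.mono fun x hx => ?_) (hne.mono fun x hx => ?_) hbound
      · exact mul_nonneg (div_nonneg (Real.exp_pos _).le (hsumpos x).le)
          (hpos i x hx).le
      · have h1 : Real.exp (1 / f i x) / ∑ j, Real.exp (1 / f j x)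
            ≤ Real.exp (1 / f i x) / Real.exp (1 / f istar x) := by
          apply div_le_div_of_nonneg_left (Real.exp_pos _).le (Real.exp_pos _)
          exact Finset.single_le_sum (f := fun j => Real.exp (1 / f j x))
            (fun j _ => (Real.exp_pos _).le) (Finset.mem_univ _)
        rw [← Real.exp_sub] at h1
        exact mul_le_mul_of_nonneg_right h1 (hpos i x hx).le
  simpa using tendsto_finset_sum Finset.univ fun i _ => key i
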